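/- (Lemma 2, backward direction) Let T be a string over an alphabet with σ distinct symbols occurring in T, and let T = F_1 ⋯ F_m be a factorization of T such that: (i) for each factor F_k with |F_k| > 1 there exist indices i_k < j_k < k with F_k = F_{i_k} ⋯ F_{j_k}; and (ii) for any two factors F_x, F_y of length greater than 1, the associated index intervals [i_x..j_x] and [i_y..j_y] are either disjoint or one is contained in the other. Then there exists a straight-line program G of size m + σ − 1 producing T whose grammar parsing is exactly F_1 ⋯ F_m. -/

import Mathlib

/-- A straight-line program: a grammar in Chomsky normal form with nonterminals `0, …, g-1`,
a start symbol, and exactly one production per nonterminal, either `X → c` (a terminal) or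
`X → Y Z` with `Y, Z` strictly smaller nonterminals (which makes the grammar acyclic, so that
each nonterminal derives a unique string). -/
structure SLP (α : Type*) where
  /-- the number of nonterminals (= number of productions = size of the SLP) -/
  g : ℕ
  /-- the start symbol -/
  start : Fin g
  /-- the unique production of each nonterminal -/
  rule : Fin g → α ⊕ (Fin g × Fin g)
  /-- binary rules refer to strictly smaller nonterminals -/
  wf : ∀ i j k, rule i = Sum.inr (j, k) → j < i ∧ k < i

namespace SLP

variable {α : Type*}

/-- The string derived from nonterminal `i`. -/
def expand (G : SLP α) (i : Fin G.g) : List α :=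
  match h : G.rule i with
  | Sum.inl c => [c]
  | Sum.inr (j, k) => G.expand j ++ G.expand k
termination_by i.val
decreasing_by
  · exact (G.wf i j k h).1
  · exact (G.wf i j k h).2

/-- `G` produces the string `T`. -/
def Produces (G : SLP α) (T : List α) : Prop := G.expand G.start = T

/-- The size of an SLP: its number of productions. -/
def size (G : SLP α) : ℕ := G.g

/-- Pre-order traversal of the parse tree computing the leaves of the *partial parse tree*:
a node labeled by a nonterminal with a binary rule is internal only at its leftmost (first in
pre-order) occurrence; all later occurrences become leaves. `seen` is the set of binary
nonterminals already expanded to the left; the function returns the factors contributed by the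
subtree rooted at `i` together with the updated set. -/
def visit (G : SLP α) (i : Fin G.g) (seen : Finset (Fin G.g)) :
    List (List α) × Finset (Fin G.g) :=
  match h : G.rule i with
  | Sum.inl _ => ([G.expand i], seen)
  | Sum.inr (j, k) =>
    if i ∈ seen then ([G.expand i], seen)
    else
      let r₁ := G.visit j (insert i seen)
      let r₂ := G.visit k r₁.2
      (r₁.1 ++ r₂.1, r₂.2)
termination_by i.val
decreasing_by
  · exact (G.wf i j k h).1
  · exact (G.wf i j k h).2

/-- The grammar parsing of the produced string with respect to `G`: the factorization given by
the leaves of the partial parse tree, read left to right. -/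
def grammarParsing (G : SLP α) : List (List α) := (G.visit G.start ∅).1

/-- Nonterminal `i` is used, i.e., reachable from the start symbol. -/
inductive Reachable (G : SLP α) : Fin G.g → Prop
  | start : G.Reachable G.start
  | left {i j k} : G.Reachable i → G.rule i = Sum.inr (j, k) → G.Reachable j
  | right {i j k} : G.Reachable i → G.rule i = Sum.inr (j, k) → G.Reachable k

end SLP

variable {α : Type*} [DecidableEq α]

set_option linter.unusedSectionVars false
set_option linter.unusedVariables false
set_option maxHeartbeats 1000000

namespace SLP
variable {α : Type*}

lemma expand_inl (G : SLP α) {i : Fin G.g} {c : α} (h : G.rule i = Sum.inl c) :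
    G.expand i = [c] := by
  rw [expand]
  split
  · rename_i c' h'; rw [h] at h'; cases h'; rfl
  · rename_i j k h'; rw [h] at h'; cases h'

lemma expand_inr (G : SLP α) {i j k : Fin G.g} (h : G.rule i = Sum.inr (j, k)) :
    G.expand i = G.expand j ++ G.expand k := by
  rw [expand]
  split
  · rename_i c' h'; rw [h] at h'; cases h'
  · rename_i j' k' h'; rw [h] at h'; cases h'; rfl

lemma visit_inl (G : SLP α) {i : Fin G.g} {c : α} (h : G.rule i = Sum.inl c)
    (seen : Finset (Fin G.g)) : G.visit i seen = ([G.expand i], seen) := by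
  rw [visit]
  split
  · rfl
  · rename_i j k h'; rw [h] at h'; cases h'

lemma visit_inr_mem (G : SLP α) {i j k : Fin G.g} (h : G.rule i = Sum.inr (j, k))
    {seen : Finset (Fin G.g)} (hm : i ∈ seen) : G.visit i seen = ([G.expand i], seen) := by
  rw [visit]
  split
  · rfl
  · rename_i j' k' h'; rw [h] at h'; cases h'
    rw [if_pos hm]

lemma visit_inr_not_mem (G : SLP α) {i j k : Fin G.g} (h : G.rule i = Sum.inr (j, k))
    {seen : Finset (Fin G.g)} (hm : i ∉ seen) :
    G.visit i seen = ((G.visit j (insert i seen)).1 ++ (G.visit k (G.visit j (insert i seen)).2).1,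
      (G.visit k (G.visit j (insert i seen)).2).2) := by
  rw [visit]
  split
  · rename_i c' h'; rw [h] at h'; cases h'
  · rename_i j' k' h'; rw [h] at h'; cases h'
    rw [if_neg hm]

end SLP

namespace Lem2
variable {α : Type*} [DecidableEq α]
variable (T : List α) (F : List (List α)) (I J : ℕ → ℕ)

def RS : Finset (ℕ × ℕ) :=
  ((Finset.range F.length).filter (fun k => 1 < (F.getD k []).length)).image (fun k => (I k, J k))

lemma mem_RS {p : ℕ × ℕ} :
    p ∈ RS F I J ↔ ∃ k < F.length, 1 < (F.getD k []).length ∧ I k = p.1 ∧ J k = p.2 := by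
  simp only [RS, Finset.mem_image, Finset.mem_filter, Finset.mem_range, Prod.ext_iff]
  constructor
  · rintro ⟨k, ⟨h1, h2⟩, h3, h4⟩; exact ⟨k, h1, h2, h3, h4⟩
  · rintro ⟨k, h1, h2, h3, h4⟩; exact ⟨k, ⟨h1, h2⟩, h3, h4⟩

def cont (s : ℕ) : Finset (ℕ × ℕ) :=
  insert (0, F.length - 1) ((RS F I J).filter fun p => p.1 < s ∧ s ≤ p.2)

def aN (s : ℕ) : ℕ := ((cont F I J s).image Prod.fst).max' (by simp [cont])
def cN (s : ℕ) : ℕ := ((cont F I J s).image Prod.snd).min' (by simp [cont])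
def eS (s : ℕ) : Finset ℕ := ((RS F I J).filter fun p => p.1 = s).image Prod.snd
def eN (s : ℕ) : ℕ := if h : (eS F I J s).Nonempty then (eS F I J s).max' h else s
def tS (x y : ℕ) : Finset ℕ := ((RS F I J).filter fun p => x < p.1 ∧ p.2 = y).image Prod.fst
def tN (x y : ℕ) : ℕ := if h : (tS F I J x y).Nonempty then (tS F I J x y).min' h else y
def key (s : ℕ) : ℕ := eN F I J s * F.length + (F.length - 1 - aN F I J s)
def splits : Finset ℕ := Finset.Icc 1 (F.length - 1)
def binIdx (s : ℕ) : ℕ :=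
  T.dedup.length + ((splits F).filter fun s' => key F I J s' < key F I J s).card
def repN (k : ℕ) : ℕ :=
  if 1 < (F.getD k []).length then binIdx T F I J (tN F I J (I k) (J k))
  else (F.getD k []).head?.elim 0 (fun c => T.dedup.idxOf c)
def lcN (s : ℕ) : ℕ :=
  if aN F I J s = s - 1 then repN T F I J (s - 1) else binIdx T F I J (tN F I J (aN F I J s) (s - 1))
def rcN (s : ℕ) : ℕ :=
  if eN F I J s = s then repN T F I J s else binIdx T F I J (tN F I J s (eN F I J s))
def gN : ℕ := T.dedup.length + (F.length - 1)
def sInv (i : ℕ) : ℕ :=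
  if h : (((splits F).filter fun s => binIdx T F I J s = i)).Nonempty
  then (((splits F).filter fun s => binIdx T F I J s = i)).min' h else 0

/-- abbreviated hypotheses -/
def hypR : Prop := ∀ p ∈ RS F I J, p.1 < p.2 ∧ p.2 + 1 < F.length
def hypLam : Prop := ∀ p q, p ∈ RS F I J → q ∈ RS F I J →
  (p.2 < q.1 ∨ q.2 < p.1) ∨ (p.1 ≤ q.1 ∧ q.2 ≤ p.2) ∨ (q.1 ≤ p.1 ∧ p.2 ≤ q.2)

variable {T F I J}

lemma mem_cont {s : ℕ} {p : ℕ × ℕ} :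
    p ∈ cont F I J s ↔ p = (0, F.length - 1) ∨ (p ∈ RS F I J ∧ p.1 < s ∧ s ≤ p.2) := by
  simp [cont, Finset.mem_insert, Finset.mem_filter, and_assoc]

lemma root_mem_cont {s : ℕ} : (0, F.length - 1) ∈ cont F I J s := by
  simp [mem_cont]

lemma cont_le {s : ℕ} {p : ℕ × ℕ} (hp : p ∈ cont F I J s) :
    p.1 ≤ aN F I J s ∧ cN F I J s ≤ p.2 :=
  ⟨Finset.le_max' _ _ (Finset.mem_image_of_mem _ hp),
   Finset.min'_le _ _ (Finset.mem_image_of_mem _ hp)⟩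

lemma exists_aN (s : ℕ) : ∃ p ∈ cont F I J s, p.1 = aN F I J s := by
  have h : aN F I J s ∈ (cont F I J s).image Prod.fst := Finset.max'_mem _ _
  rw [Finset.mem_image] at h
  obtain ⟨p, hp, he⟩ := h
  exact ⟨p, hp, he⟩

lemma exists_cN (s : ℕ) : ∃ p ∈ cont F I J s, p.2 = cN F I J s := by
  have h : cN F I J s ∈ (cont F I J s).image Prod.snd := Finset.min'_mem _ _
  rw [Finset.mem_image] at h
  obtain ⟨p, hp, he⟩ := h
  exact ⟨p, hp, he⟩

lemma aN_lt {s : ℕ} (hs : 1 ≤ s) : aN F I J s < s := by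
  obtain ⟨p, hp, he⟩ := exists_aN (F := F) (I := I) (J := J) s
  rw [mem_cont] at hp
  rcases hp with h | ⟨_, h2, _⟩
  · have : p.1 = 0 := by rw [h]
    omega
  · omega

lemma le_cN {s : ℕ} (hs : s ≤ F.length - 1) : s ≤ cN F I J s := by
  obtain ⟨p, hp, he⟩ := exists_cN (F := F) (I := I) (J := J) s
  rw [mem_cont] at hp
  rcases hp with h | ⟨_, _, h3⟩
  · have : p.2 = F.length - 1 := by rw [h]
    omega
  · omega

lemma RS_snd_le (hR : hypR F I J) {p : ℕ × ℕ} (hp : p ∈ RS F I J) : p.2 ≤ F.length - 2 := by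
  have := (hR p hp).2; omega

lemma RS_fst_lt_snd (hR : hypR F I J) {p : ℕ × ℕ} (hp : p ∈ RS F I J) : p.1 < p.2 :=
  (hR p hp).1

lemma cN_le {s : ℕ} : cN F I J s ≤ F.length - 1 :=
  (cont_le root_mem_cont).2

lemma block_mem (hR : hypR F I J) (hL : hypLam F I J) {s : ℕ} :
    (aN F I J s, cN F I J s) ∈ cont F I J s := by
  obtain ⟨p₁, hp₁, he₁⟩ := exists_aN (F := F) (I := I) (J := J) s
  obtain ⟨p₂, hp₂, he₂⟩ := exists_cN (F := F) (I := I) (J := J) s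
  have hle₁ := cont_le hp₁
  have hle₂ := cont_le hp₂
  rw [mem_cont] at hp₁ hp₂
  rcases hp₁ with h1 | ⟨h1, h1a, h1b⟩
  · have ha0 : aN F I J s = 0 := by
      have : p₁.1 = 0 := by rw [h1]
      omega
    have hp21 : p₂.1 = 0 := by omega
    have hpe : p₂ = (aN F I J s, cN F I J s) := by
      rw [← he₂, ha0, ← hp21]
    rw [← hpe, mem_cont]
    exact hp₂
  rcases hp₂ with h2 | ⟨h2, h2a, h2b⟩
  · have hc1 : cN F I J s = F.length - 1 := by
      have : p₂.2 = F.length - 1 := by rw [h2]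
      omega
    have hb : p₁.2 ≤ F.length - 1 := le_trans (RS_snd_le hR h1) (by omega)
    have hpe : p₁ = (aN F I J s, cN F I J s) := by
      have : p₁.2 = cN F I J s := by omega
      rw [← he₁, ← this]
    rw [mem_cont]; right; rw [hpe] at h1 h1a h1b; exact ⟨h1, h1a, h1b⟩
  · rcases hL p₁ p₂ h1 h2 with (h | h) | (⟨hx, hy⟩ | ⟨hx, hy⟩)
    · omega
    · omega
    · have hpe : p₂ = (aN F I J s, cN F I J s) := by
        have : p₂.1 = aN F I J s := by omega
        rw [← he₂, ← this]
      rw [mem_cont]; right; rw [hpe] at h2 h2a h2b; exact ⟨h2, h2a, h2b⟩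
    · have hpe : p₁ = (aN F I J s, cN F I J s) := by
        have : p₁.2 = cN F I J s := by omega
        rw [← he₁, ← this]
      rw [mem_cont]; right; rw [hpe] at h1 h1a h1b; exact ⟨h1, h1a, h1b⟩

lemma block_cases (hR : hypR F I J) (hL : hypLam F I J) {s : ℕ} :
    (aN F I J s = 0 ∧ cN F I J s = F.length - 1) ∨
    ((aN F I J s, cN F I J s) ∈ RS F I J ∧ aN F I J s < s ∧ s ≤ cN F I J s) := by
  have h := block_mem (s := s) hR hL
  rw [mem_cont] at h
  rcases h with h | h
  · left
    exact ⟨congrArg Prod.fst h, congrArg Prod.snd h⟩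
  · right; exact h

lemma mem_eS {s y : ℕ} : y ∈ eS F I J s ↔ (s, y) ∈ RS F I J := by
  simp only [eS, Finset.mem_image, Finset.mem_filter]
  constructor
  · rintro ⟨p, ⟨hp, hp1⟩, hp2⟩
    have : p = (s, y) := by rw [← hp1, ← hp2]
    rwa [this] at hp
  · intro h; exact ⟨(s, y), ⟨h, rfl⟩, rfl⟩

lemma mem_tS {x y x' : ℕ} : x' ∈ tS F I J x y ↔ (x', y) ∈ RS F I J ∧ x < x' := by
  simp only [tS, Finset.mem_image, Finset.mem_filter]
  constructor
  · rintro ⟨p, ⟨hp, hp1, hp2⟩, hp3⟩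
    have : p = (x', y) := by rw [← hp2, ← hp3]
    rw [this] at hp hp1
    exact ⟨hp, hp1⟩
  · rintro ⟨h1, h2⟩; exact ⟨(x', y), ⟨h1, h2, rfl⟩, rfl⟩

lemma le_eN (hR : hypR F I J) {s : ℕ} : s ≤ eN F I J s := by
  unfold eN
  split
  · rename_i h
    have hm : (eS F I J s).max' h ∈ eS F I J s := Finset.max'_mem _ _
    rw [mem_eS] at hm
    exact le_of_lt (RS_fst_lt_snd hR hm)
  · exact le_refl _

lemma eN_eq_or_mem {s : ℕ} : eN F I J s = s ∨ (s, eN F I J s) ∈ RS F I J := by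
  unfold eN
  split
  · rename_i h
    right
    have hm : (eS F I J s).max' h ∈ eS F I J s := Finset.max'_mem _ _
    rwa [mem_eS] at hm
  · left; rfl

lemma le_eN_of_mem {s y : ℕ} (h : (s, y) ∈ RS F I J) : y ≤ eN F I J s := by
  have hy : y ∈ eS F I J s := mem_eS.2 h
  unfold eN
  split
  · exact Finset.le_max' _ _ hy
  · rename_i hn; exact absurd ⟨y, hy⟩ hn

lemma tN_cases {x y : ℕ} :
    (tN F I J x y = y ∧ ∀ x', x < x' → (x', y) ∉ RS F I J) ∨
    ((tN F I J x y, y) ∈ RS F I J ∧ x < tN F I J x y ∧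
      ∀ x'', x < x'' → (x'', y) ∈ RS F I J → tN F I J x y ≤ x'') := by
  unfold tN
  split
  · rename_i h
    right
    have hm : (tS F I J x y).min' h ∈ tS F I J x y := Finset.min'_mem _ _
    rw [mem_tS] at hm
    refine ⟨hm.1, hm.2, fun x'' h1 h2 => Finset.min'_le _ _ (mem_tS.2 ⟨h2, h1⟩)⟩
  · rename_i h
    left
    refine ⟨rfl, fun x' h1 h2 => h ⟨x', mem_tS.2 ⟨h2, h1⟩⟩⟩

lemma lam4 (hL : hypLam F I J) {a b c d : ℕ} (h1 : (a, b) ∈ RS F I J)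
    (h2 : (c, d) ∈ RS F I J) :
    (b < c ∨ d < a) ∨ (a ≤ c ∧ d ≤ b) ∨ (c ≤ a ∧ b ≤ d) := by
  have := hL _ _ h1 h2
  simpa using this

lemma eN_le_cN (hR : hypR F I J) (hL : hypLam F I J) {s : ℕ} (hs : 1 ≤ s)
    (hs2 : s ≤ F.length - 1) : eN F I J s ≤ cN F I J s := by
  rcases eN_eq_or_mem (F := F) (I := I) (J := J) (s := s) with h | h
  · rw [h]; exact le_cN hs2
  · rcases block_cases hR hL (s := s) with ⟨ha, hc⟩ | ⟨hb, hba, hbc⟩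
    · have := RS_snd_le hR h
      omega
    · have hse := le_of_lt (RS_fst_lt_snd hR h)
      rcases lam4 hL h hb with (hd | hd) | (⟨h5, h6⟩ | ⟨h5, h6⟩) <;> omega

/-- key spec of the "top node" of an interval in RS -/
lemma topSpec (hR : hypR F I J) (hL : hypLam F I J) {x y : ℕ} (hxy : (x, y) ∈ RS F I J) :
    x < tN F I J x y ∧ tN F I J x y ≤ y ∧ aN F I J (tN F I J x y) = x ∧
      eN F I J (tN F I J x y) = y := by
  set t := tN F I J x y with ht
  have hxltY : x < y := RS_fst_lt_snd hR hxy
  -- part A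
  have hA : x < t ∧ t ≤ y := by
    rcases tN_cases (F := F) (I := I) (J := J) (x := x) (y := y) with ⟨h1, _⟩ | ⟨h1, h2, _⟩
    · rw [← ht] at h1; omega
    · rw [← ht] at h1 h2
      exact ⟨h2, le_of_lt (RS_fst_lt_snd hR h1)⟩
  -- B1: no (t, z) ∈ RS with z > y
  have hB1 : ∀ z, (t, z) ∈ RS F I J → z ≤ y := by
    intro z hz
    by_contra hzy
    push_neg at hzy
    have hzt := RS_fst_lt_snd hR hz
    rcases lam4 hL hz hxy with (hd | hd) | (⟨h5, h6⟩ | ⟨h5, h6⟩) <;> omega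
  have hB : eN F I J t = y := by
    rcases eN_eq_or_mem (F := F) (I := I) (J := J) (s := t) with h | h
    · -- eN t = t : need t = y
      rcases tN_cases (F := F) (I := I) (J := J) (x := x) (y := y) with ⟨h1, _⟩ | ⟨h1, _, _⟩
      · rw [← ht] at h1; omega
      · rw [← ht] at h1
        have := le_eN_of_mem h1
        have := RS_fst_lt_snd hR h1
        omega
    · have hle := hB1 _ h
      have hge : y ≤ eN F I J t := by
        rcases tN_cases (F := F) (I := I) (J := J) (x := x) (y := y) with ⟨h1, _⟩ | ⟨h1, _, _⟩
        · rw [← ht] at h1; rw [h1]; exact le_eN hR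
        · rw [← ht] at h1; exact le_eN_of_mem h1
      omega
  refine ⟨hA.1, hA.2, ?_, hB⟩
  -- part C : aN t = x
  have hmem : (x, y) ∈ cont F I J t := by
    rw [mem_cont]; right; exact ⟨hxy, hA.1, hA.2⟩
  have hge : x ≤ aN F I J t := (cont_le hmem).1
  by_contra hne
  have hgt : x < aN F I J t := by omega
  rcases block_cases hR hL (s := t) with ⟨ha, _⟩ | ⟨hb, hba, hbc⟩
  · omega
  · have hcy : cN F I J t ≤ y := (cont_le hmem).2
    rcases eq_or_lt_of_le hcy with hcy' | hcy'
    · -- cN t = y : contradiction with minimality of t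
      rcases tN_cases (F := F) (I := I) (J := J) (x := x) (y := y) with ⟨_, h2⟩ | ⟨_, _, h3⟩
      · exact h2 _ hgt (by rwa [hcy'] at hb)
      · have := h3 _ hgt (by rwa [hcy'] at hb)
        rw [← ht] at this
        omega
    · -- cN t < y
      rcases tN_cases (F := F) (I := I) (J := J) (x := x) (y := y) with ⟨h1, _⟩ | ⟨h1, _, _⟩
      · rw [← ht] at h1; omega
      · rw [← ht] at h1
        rcases lam4 hL hb h1 with (hd | hd) | (⟨h5, h6⟩ | ⟨h5, h6⟩) <;> omega

/-- spec of the top node of the left part `[aN s, s-1]` when it is not a single factor -/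
lemma lcSpec (hR : hypR F I J) (hL : hypLam F I J) {s : ℕ} (hs : 1 ≤ s)
    (hs2 : s ≤ F.length - 1) (hlt : aN F I J s < s - 1) :
    aN F I J s < tN F I J (aN F I J s) (s - 1) ∧ tN F I J (aN F I J s) (s - 1) ≤ s - 1 ∧
      aN F I J (tN F I J (aN F I J s) (s - 1)) = aN F I J s ∧
      eN F I J (tN F I J (aN F I J s) (s - 1)) = s - 1 := by
  by_cases hmem : (aN F I J s, s - 1) ∈ RS F I J
  · exact topSpec hR hL hmem
  set a := aN F I J s with ha
  set t := tN F I J a (s - 1) with ht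
  -- part A
  have hA : a < t ∧ t ≤ s - 1 := by
    rcases tN_cases (F := F) (I := I) (J := J) (x := a) (y := s - 1) with ⟨h1, _⟩ | ⟨h1, h2, _⟩
    · rw [← ht] at h1; omega
    · rw [← ht] at h1 h2
      exact ⟨h2, le_of_lt (RS_fst_lt_snd hR h1)⟩
  -- E1 : intervals starting at t stay below s
  have hE1 : ∀ z, (t, z) ∈ RS F I J → z ≤ s - 1 := by
    intro z hz
    by_contra hzy
    push_neg at hzy
    have hzs : s ≤ z := by omega
    have : (t, z) ∈ cont F I J s := by
      rw [mem_cont]; right; exact ⟨hz, by omega, hzs⟩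
    have := (cont_le this).1
    simp only at this
    omega
  have hE : eN F I J t = s - 1 := by
    rcases eN_eq_or_mem (F := F) (I := I) (J := J) (s := t) with h | h
    · rcases tN_cases (F := F) (I := I) (J := J) (x := a) (y := s - 1) with ⟨h1, _⟩ | ⟨h1, _, _⟩
      · rw [← ht] at h1; omega
      · rw [← ht] at h1
        have := le_eN_of_mem h1
        have := RS_fst_lt_snd hR h1
        omega
    · have hle := hE1 _ h
      have hge : s - 1 ≤ eN F I J t := by
        rcases tN_cases (F := F) (I := I) (J := J) (x := a) (y := s - 1) with ⟨h1, _⟩ | ⟨h1, _, _⟩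
        · rw [← ht] at h1; rw [h1]; exact le_eN hR
        · rw [← ht] at h1; exact le_eN_of_mem h1
      omega
  refine ⟨hA.1, hA.2, ?_, hE⟩
  -- aN t = a
  have hge : a ≤ aN F I J t := by
    rcases block_cases hR hL (s := s) with ⟨ha0, _⟩ | ⟨hb, hba, hbc⟩
    · rw [← ha] at ha0; omega
    · have : (a, cN F I J s) ∈ cont F I J t := by
        rw [mem_cont]; right
        refine ⟨hb, hA.1, ?_⟩
        simp only
        omega
      exact (cont_le this).1
  by_contra hne
  have hgt : a < aN F I J t := by omega
  rcases block_cases hR hL (s := t) with ⟨ha0, _⟩ | ⟨hb, hba, hbc⟩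
  · omega
  · have hcs : cN F I J t < s := by
      by_contra hcs
      push_neg at hcs
      have : (aN F I J t, cN F I J t) ∈ cont F I J s := by
        rw [mem_cont]; right; exact ⟨hb, by omega, hcs⟩
      have := (cont_le this).1
      simp only at this
      omega
    rcases eq_or_lt_of_le (show cN F I J t ≤ s - 1 by omega) with hcy' | hcy'
    · rcases tN_cases (F := F) (I := I) (J := J) (x := a) (y := s - 1) with ⟨_, h2⟩ | ⟨_, _, h3⟩
      · exact h2 _ hgt (by rwa [hcy'] at hb)
      · have := h3 _ hgt (by rwa [hcy'] at hb)
        rw [← ht] at this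
        omega
    · rcases tN_cases (F := F) (I := I) (J := J) (x := a) (y := s - 1) with ⟨h1, _⟩ | ⟨h1, _, _⟩
      · rw [← ht] at h1; omega
      · rw [← ht] at h1
        rcases lam4 hL hb h1 with (hd | hd) | ⟨h5, h6⟩ | ⟨h5, h6⟩ <;> omega

/-- no other comb node's span both contains the gap `s` and is inside the span of `s` -/
lemma cross (hR : hypR F I J) (hL : hypLam F I J) {s s' : ℕ}
    (hs : 1 ≤ s) (hs2 : s ≤ F.length - 1) (hs' : 1 ≤ s') (hs2' : s' ≤ F.length - 1)
    (h1 : aN F I J s ≤ aN F I J s') (h2 : eN F I J s' ≤ eN F I J s)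
    (h3 : aN F I J s' < s) (h4 : s ≤ eN F I J s') : s' = s := by
  have hec' : eN F I J s' ≤ cN F I J s' := eN_le_cN hR hL hs' hs2'
  have hec : eN F I J s ≤ cN F I J s := eN_le_cN hR hL hs hs2
  have hse : s ≤ eN F I J s := le_eN hR
  have hse' : s' ≤ eN F I J s' := le_eN hR
  -- block s' ∈ cont s
  have hba : aN F I J s' ≤ aN F I J s ∧ cN F I J s ≤ cN F I J s' := by
    rcases block_cases hR hL (s := s') with ⟨ha0, hc0⟩ | ⟨hb, _, _⟩
    · constructor
      · omega
      · rw [hc0]; exact cN_le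
    · have : (aN F I J s', cN F I J s') ∈ cont F I J s := by
        rw [mem_cont]; right; exact ⟨hb, h3, by omega⟩
      exact cont_le this
  have hbc : aN F I J s ≤ aN F I J s' ∧ cN F I J s' ≤ cN F I J s := by
    rcases block_cases hR hL (s := s) with ⟨ha0, hc0⟩ | ⟨hb, _, _⟩
    · constructor
      · omega
      · rw [hc0]; exact cN_le
    · have : (aN F I J s, cN F I J s) ∈ cont F I J s' := by
        rw [mem_cont]; right
        refine ⟨hb, ?_, by omega⟩
        have := aN_lt (F := F) (I := I) (J := J) hs'
        omega
      exact cont_le this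
  have hans : aN F I J s < s := aN_lt hs
  have hans' : aN F I J s' < s' := aN_lt hs'
  have haa : aN F I J s = aN F I J s' := by omega
  have hcc : cN F I J s = cN F I J s' := by omega
  rcases lt_trichotomy s' s with hlt | heq | hgt
  · exfalso
    have hne : eN F I J s' ≠ s' := by omega
    have hmem : (s', eN F I J s') ∈ RS F I J := by
      rcases eN_eq_or_mem (F := F) (I := I) (J := J) (s := s') with h | h
      · omega
      · exact h
    have : (s', eN F I J s') ∈ cont F I J s := by
      rw [mem_cont]; right; exact ⟨hmem, hlt, h4⟩
    have := (cont_le this).1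
    simp only at this
    omega
  · exact heq
  · exfalso
    have hne : eN F I J s ≠ s := by omega
    have hmem : (s, eN F I J s) ∈ RS F I J := by
      rcases eN_eq_or_mem (F := F) (I := I) (J := J) (s := s) with h | h
      · omega
      · exact h
    have : (s, eN F I J s) ∈ cont F I J s' := by
      rw [mem_cont]; right; exact ⟨hmem, hgt, by omega⟩
    have := (cont_le this).1
    simp only at this
    omega

lemma mem_splits {s : ℕ} : s ∈ splits F ↔ 1 ≤ s ∧ s ≤ F.length - 1 := by
  simp [splits, Finset.mem_Icc]

lemma splits_card : (splits F).card = F.length - 1 := by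
  simp [splits]

lemma eN_le (hR : hypR F I J) {s : ℕ} (hs2 : s ≤ F.length - 1) : eN F I J s ≤ F.length - 1 := by
  rcases eN_eq_or_mem (F := F) (I := I) (J := J) (s := s) with h | h
  · omega
  · have := RS_snd_le hR h
    omega

lemma key_lt_key₁ {s s' : ℕ} (hm : 1 ≤ F.length) (ha : aN F I J s ≤ F.length - 1)
    (h : eN F I J s < eN F I J s') : key F I J s < key F I J s' := by
  unfold key
  have h1 : eN F I J s * F.length + (F.length - 1 - aN F I J s) < (eN F I J s + 1) * F.length := by
    have : F.length - 1 - aN F I J s < F.length := by omega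
    calc eN F I J s * F.length + (F.length - 1 - aN F I J s)
        < eN F I J s * F.length + F.length := by omega
      _ = (eN F I J s + 1) * F.length := by ring
  have h2 : (eN F I J s + 1) * F.length ≤ eN F I J s' * F.length :=
    Nat.mul_le_mul_right _ h
  omega

lemma key_lt_key₂ {s s' : ℕ} (he : eN F I J s = eN F I J s')
    (ha : aN F I J s ≤ F.length - 1) (h : aN F I J s' < aN F I J s) :
    key F I J s < key F I J s' := by
  unfold key
  rw [he]
  have : F.length - 1 - aN F I J s < F.length - 1 - aN F I J s' := by omega
  omega

lemma key_inj (hR : hypR F I J) (hL : hypLam F I J) {s s' : ℕ}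
    (hs : s ∈ splits F) (hs' : s' ∈ splits F) (hk : key F I J s = key F I J s') : s = s' := by
  rw [mem_splits] at hs hs'
  have hm : 1 ≤ F.length := by omega
  have has : aN F I J s < s := aN_lt hs.1
  have has' : aN F I J s' < s' := aN_lt hs'.1
  have hbs : aN F I J s ≤ F.length - 1 := by omega
  have hbs' : aN F I J s' ≤ F.length - 1 := by omega
  have he : eN F I J s = eN F I J s' := by
    rcases lt_trichotomy (eN F I J s) (eN F I J s') with h | h | h
    · exact absurd hk (Nat.ne_of_lt (key_lt_key₁ hm hbs h))
    · exact h
    · exact absurd hk.symm (Nat.ne_of_lt (key_lt_key₁ hm hbs' h))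
  have ha : aN F I J s = aN F I J s' := by
    unfold key at hk
    rw [he] at hk
    have := Nat.add_left_cancel hk
    omega
  exact cross hR hL hs'.1 hs'.2 hs.1 hs.2 (by omega) (by omega) (by omega)
    (by have := le_eN (s := s') hR; omega)

lemma binIdx_lt_binIdx {s s' : ℕ} (hs : s ∈ splits F) (h : key F I J s < key F I J s') :
    binIdx T F I J s < binIdx T F I J s' := by
  unfold binIdx
  have hsub : (splits F).filter (fun x => key F I J x < key F I J s) ⊂
      (splits F).filter (fun x => key F I J x < key F I J s') := by
    constructor
    · intro x hx
      rw [Finset.mem_filter] at hx ⊢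
      exact ⟨hx.1, lt_trans hx.2 h⟩
    · intro hcon
      have : s ∈ (splits F).filter (fun x => key F I J x < key F I J s') :=
        Finset.mem_filter.2 ⟨hs, h⟩
      have := hcon this
      rw [Finset.mem_filter] at this
      omega
  have := Finset.card_lt_card hsub
  omega

lemma binIdx_le (s : ℕ) : T.dedup.length ≤ binIdx T F I J s := Nat.le_add_right _ _

lemma binIdx_lt_gN {s : ℕ} (hs : s ∈ splits F) : binIdx T F I J s < gN T F := by
  unfold binIdx gN
  have hsub : (splits F).filter (fun x => key F I J x < key F I J s) ⊆ (splits F).erase s := by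
    intro x hx
    rw [Finset.mem_filter] at hx
    rw [Finset.mem_erase]
    refine ⟨fun he => ?_, hx.1⟩
    rw [he] at hx
    omega
  have h1 := Finset.card_le_card hsub
  have h2 : ((splits F).erase s).card = (splits F).card - 1 := Finset.card_erase_of_mem hs
  have h3 := splits_card (F := F)
  have h4 : 1 ≤ (splits F).card := Finset.card_pos.2 ⟨s, hs⟩
  omega

lemma binIdx_inj (hR : hypR F I J) (hL : hypLam F I J) {s s' : ℕ}
    (hs : s ∈ splits F) (hs' : s' ∈ splits F)
    (h : binIdx T F I J s = binIdx T F I J s') : s = s' := by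
  rcases lt_trichotomy (key F I J s) (key F I J s') with hh | hh | hh
  · exact absurd h (Nat.ne_of_lt (binIdx_lt_binIdx hs hh))
  · exact key_inj hR hL hs hs' hh
  · exact absurd h.symm (Nat.ne_of_lt (binIdx_lt_binIdx hs' hh))

lemma binIdx_surj (hR : hypR F I J) (hL : hypLam F I J) {i : ℕ}
    (hi : T.dedup.length ≤ i) (hi2 : i < gN T F) : ∃ s ∈ splits F, binIdx T F I J s = i := by
  have himg : (splits F).image (binIdx T F I J) = Finset.Ico T.dedup.length (gN T F) := by
    apply Finset.eq_of_subset_of_card_le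
    · intro x hx
      rw [Finset.mem_image] at hx
      obtain ⟨s, hs, he⟩ := hx
      rw [Finset.mem_Ico, ← he]
      exact ⟨binIdx_le s, binIdx_lt_gN hs⟩
    · rw [Nat.card_Ico]
      rw [Finset.card_image_of_injOn (fun x hx y hy hxy => binIdx_inj hR hL hx hy hxy)]
      rw [splits_card]
      unfold gN
      omega
  have : i ∈ (splits F).image (binIdx T F I J) := by
    rw [himg, Finset.mem_Ico]
    exact ⟨hi, hi2⟩
  rw [Finset.mem_image] at this
  exact this

lemma sInv_spec (hR : hypR F I J) (hL : hypLam F I J) {i : ℕ}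
    (hi : T.dedup.length ≤ i) (hi2 : i < gN T F) :
    sInv T F I J i ∈ splits F ∧ binIdx T F I J (sInv T F I J i) = i := by
  obtain ⟨s, hs, he⟩ := binIdx_surj hR hL hi hi2
  have hne : (((splits F).filter fun x => binIdx T F I J x = i)).Nonempty :=
    ⟨s, Finset.mem_filter.2 ⟨hs, he⟩⟩
  unfold sInv
  rw [dif_pos hne]
  have := Finset.min'_mem _ hne
  rw [Finset.mem_filter] at this
  exact this

lemma sInv_binIdx (hR : hypR F I J) (hL : hypLam F I J) {s : ℕ} (hs : s ∈ splits F) :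
    sInv T F I J (binIdx T F I J s) = s := by
  have h := sInv_spec (T := T) (F := F) (I := I) (J := J) hR hL
    (i := binIdx T F I J s) (binIdx_le s) (binIdx_lt_gN hs)
  exact binIdx_inj hR hL h.1 hs h.2

def hypJlt (F : List (List α)) (J : ℕ → ℕ) : Prop :=
  ∀ k, k < F.length → 1 < (F.getD k []).length → J k < k
def hypNE (F : List (List α)) : Prop := ∀ k, k < F.length → F.getD k [] ≠ []
def hypHead (T : List α) (F : List (List α)) : Prop :=
  ∀ k, k < F.length → ∀ c ∈ F.getD k [], c ∈ T

def hypSlice (F : List (List α)) (I J : ℕ → ℕ) : Prop :=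
  ∀ k, k < F.length → 1 < (F.getD k []).length →
    F.getD k [] = ((F.take (J k + 1)).drop (I k)).flatten

/-- bundle of all structural hypotheses -/
def Good (T : List α) (F : List (List α)) (I J : ℕ → ℕ) : Prop :=
  hypR F I J ∧ hypLam F I J ∧ hypJlt F J ∧ hypNE F ∧ hypHead T F ∧
  1 ≤ F.length ∧ 1 ≤ T.dedup.length ∧ hypSlice F I J

lemma Good.hR (h : Good T F I J) : hypR F I J := h.1
lemma Good.hL (h : Good T F I J) : hypLam F I J := h.2.1
lemma Good.hJ (h : Good T F I J) : hypJlt F J := h.2.2.1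
lemma Good.hNE (h : Good T F I J) : hypNE F := h.2.2.2.1
lemma Good.hHead (h : Good T F I J) : hypHead T F := h.2.2.2.2.1
lemma Good.hm (h : Good T F I J) : 1 ≤ F.length := h.2.2.2.2.2.1
lemma Good.hσ (h : Good T F I J) : 1 ≤ T.dedup.length := h.2.2.2.2.2.2.1
lemma Good.hS (h : Good T F I J) : hypSlice F I J := h.2.2.2.2.2.2.2
lemma Good.hg (h : Good T F I J) : 0 < gN T F := by
  have := h.hσ; unfold gN; omega

lemma RS_self {k : ℕ} (hk : k < F.length) (hbig : 1 < (F.getD k []).length) :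
    (I k, J k) ∈ RS F I J := (mem_RS F I J).2 ⟨k, hk, hbig, rfl, rfl⟩

lemma repN_small_lt (hG : Good T F I J) {k : ℕ} (hk : k < F.length)
    (hsmall : ¬ 1 < (F.getD k []).length) : repN T F I J k < T.dedup.length := by
  unfold repN
  rw [if_neg hsmall]
  have hne := hG.hNE k hk
  rcases hx : F.getD k [] with _ | ⟨c, rest⟩
  · exact absurd hx hne
  · simp only [List.head?, Option.elim]
    have hc : c ∈ T := hG.hHead k hk c (by rw [hx]; exact List.mem_cons_self)
    have : c ∈ T.dedup := List.mem_dedup.2 hc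
    exact List.idxOf_lt_length_iff.2 this

/-- spec of the top node of a long factor's interval -/
lemma repN_big_spec (hG : Good T F I J) {k : ℕ} (hk : k < F.length)
    (hbig : 1 < (F.getD k []).length) :
    tN F I J (I k) (J k) ∈ splits F ∧
    aN F I J (tN F I J (I k) (J k)) = I k ∧
    eN F I J (tN F I J (I k) (J k)) = J k ∧
    I k < tN F I J (I k) (J k) ∧ tN F I J (I k) (J k) ≤ J k ∧ J k < k := by
  have hmem := RS_self (I := I) (J := J) hk hbig
  have hts := topSpec hG.hR hG.hL hmem
  have hJk := hG.hJ k hk hbig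
  have hJ2 := RS_snd_le hG.hR hmem
  refine ⟨?_, hts.2.2.1, hts.2.2.2, hts.1, hts.2.1, hJk⟩
  rw [mem_splits]
  constructor
  · omega
  · simp only at hJ2; omega

lemma lcN_lt (hG : Good T F I J) {s : ℕ} (hs : s ∈ splits F) :
    lcN T F I J s < binIdx T F I J s := by
  have hsb := mem_splits.1 hs
  have hm2 : 2 ≤ F.length := by omega
  have has : aN F I J s < s := aN_lt hsb.1
  have hes : s ≤ eN F I J s := le_eN hG.hR
  unfold lcN
  split
  · -- left child is the single factor s-1
    rename_i ha
    by_cases hbig : 1 < (F.getD (s-1) []).length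
    · unfold repN
      rw [if_pos hbig]
      obtain ⟨hts, hta, hte, _, _, hJk⟩ := repN_big_spec hG (k := s-1) (by omega) hbig
      apply binIdx_lt_binIdx hts
      apply key_lt_key₁ (by omega)
      · rw [hta]
        have := RS_fst_lt_snd hG.hR (RS_self (I := I) (J := J) (k := s-1) (by omega) hbig)
        have := RS_snd_le hG.hR (RS_self (I := I) (J := J) (k := s-1) (by omega) hbig)
        simp only at *
        omega
      · rw [hte]; omega
    · have := repN_small_lt hG (k := s-1) (by omega) hbig
      have := binIdx_le (T := T) (F := F) (I := I) (J := J) s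
      omega
  · -- left child is a comb node
    rename_i ha
    have halt : aN F I J s < s - 1 := by omega
    obtain ⟨ht1, ht2, hta, hte⟩ := lcSpec hG.hR hG.hL hsb.1 hsb.2 halt
    apply binIdx_lt_binIdx
    · rw [mem_splits]; omega
    · apply key_lt_key₁ (by omega)
      · rw [hta]; omega
      · rw [hte]; omega

lemma rcN_lt (hG : Good T F I J) {s : ℕ} (hs : s ∈ splits F) :
    rcN T F I J s < binIdx T F I J s := by
  have hsb := mem_splits.1 hs
  have has : aN F I J s < s := aN_lt hsb.1
  have hes : s ≤ eN F I J s := le_eN hG.hR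
  unfold rcN
  split
  · rename_i he
    by_cases hbig : 1 < (F.getD s []).length
    · unfold repN
      rw [if_pos hbig]
      obtain ⟨hts, hta, hte, _, _, hJk⟩ := repN_big_spec hG (k := s) (by omega) hbig
      apply binIdx_lt_binIdx hts
      apply key_lt_key₁ (by omega)
      · rw [hta]
        have := RS_snd_le hG.hR (RS_self (I := I) (J := J) (k := s) (by omega) hbig)
        have := RS_fst_lt_snd hG.hR (RS_self (I := I) (J := J) (k := s) (by omega) hbig)
        simp only at *
        omega
      · rw [hte]; omega
    · have := repN_small_lt hG (k := s) (by omega) hbig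
      have := binIdx_le (T := T) (F := F) (I := I) (J := J) s
      omega
  · rename_i he
    have hmem : (s, eN F I J s) ∈ RS F I J := by
      rcases eN_eq_or_mem (F := F) (I := I) (J := J) (s := s) with h | h
      · exact absurd h he
      · exact h
    obtain ⟨ht1, ht2, hta, hte⟩ := topSpec hG.hR hG.hL hmem
    have heb := eN_le hG.hR hsb.2
    apply binIdx_lt_binIdx
    · rw [mem_splits]; omega
    · apply key_lt_key₂
      · rw [hte]
      · rw [hta]; omega
      · rw [hta]; omega

lemma lcN_lt_gN (hG : Good T F I J) {s : ℕ} (hs : s ∈ splits F) :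
    lcN T F I J s < gN T F := lt_trans (lcN_lt hG hs) (binIdx_lt_gN hs)

lemma rcN_lt_gN (hG : Good T F I J) {s : ℕ} (hs : s ∈ splits F) :
    rcN T F I J s < gN T F := lt_trans (rcN_lt hG hs) (binIdx_lt_gN hs)

/-- the constructed SLP -/
def mkG (T : List α) (F : List (List α)) (I J : ℕ → ℕ) (hG : Good T F I J) : SLP α where
  g := gN T F
  start := ⟨binIdx T F I J (F.length - 1) % gN T F, Nat.mod_lt _ hG.hg⟩
  rule i :=
    if h : (i : ℕ) < T.dedup.length then Sum.inl (T.dedup.get ⟨i, h⟩)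
    else Sum.inr (⟨lcN T F I J (sInv T F I J i) % gN T F, Nat.mod_lt _ hG.hg⟩,
                  ⟨rcN T F I J (sInv T F I J i) % gN T F, Nat.mod_lt _ hG.hg⟩)
  wf i j k h := by
    by_cases hi : (i : ℕ) < T.dedup.length
    · rw [dif_pos hi] at h; cases h
    · rw [dif_neg hi] at h
      obtain ⟨hj, hk⟩ := Prod.mk.injEq .. ▸ (Sum.inr.injEq .. ▸ h)
      obtain ⟨hsp, hbi⟩ := sInv_spec hG.hR hG.hL (by omega) i.isLt
      have hl := lcN_lt hG hsp
      have hr := rcN_lt hG hsp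
      have hl2 := lcN_lt_gN hG hsp
      have hr2 := rcN_lt_gN hG hsp
      constructor
      · rw [← hj, Fin.lt_def]
        simp only
        rw [Nat.mod_eq_of_lt hl2]
        omega
      · rw [← hk, Fin.lt_def]
        simp only
        rw [Nat.mod_eq_of_lt hr2]
        omega

def fN (hG : Good T F I J) (n : ℕ) : Fin (gN T F) := ⟨n % gN T F, Nat.mod_lt _ hG.hg⟩

lemma fN_coe (hG : Good T F I J) {n : ℕ} (h : n < gN T F) : (fN hG n : ℕ) = n :=
  Nat.mod_eq_of_lt h

lemma rule_term (hG : Good T F I J) {i : Fin (gN T F)} (hi : (i : ℕ) < T.dedup.length) :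
    (mkG T F I J hG).rule i = Sum.inl (T.dedup.get ⟨i, hi⟩) := dif_pos hi

lemma rule_bin (hG : Good T F I J) {i : Fin (gN T F)} (hi : ¬ (i : ℕ) < T.dedup.length) :
    (mkG T F I J hG).rule i =
      Sum.inr (fN hG (lcN T F I J (sInv T F I J i)), fN hG (rcN T F I J (sInv T F I J i))) :=
  dif_neg hi

lemma coe_fN_binIdx (hG : Good T F I J) {s : ℕ} (hs : s ∈ splits F) :
    ((fN hG (binIdx T F I J s) : Fin (gN T F)) : ℕ) = binIdx T F I J s :=
  fN_coe hG (binIdx_lt_gN hs)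

lemma rule_of_splits (hG : Good T F I J) {s : ℕ} (hs : s ∈ splits F) :
    (mkG T F I J hG).rule (fN hG (binIdx T F I J s)) =
      Sum.inr (fN hG (lcN T F I J s), fN hG (rcN T F I J s)) := by
  have hco := coe_fN_binIdx hG hs
  have hi : ¬ ((fN hG (binIdx T F I J s) : Fin (gN T F)) : ℕ) < T.dedup.length := by
    rw [hco]
    have := binIdx_le (T := T) (F := F) (I := I) (J := J) s
    omega
  rw [rule_bin hG hi, hco, sInv_binIdx hG.hR hG.hL hs]

lemma small_factor (hG : Good T F I J) {k : ℕ} (hk : k < F.length)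
    (hsmall : ¬ 1 < (F.getD k []).length) : ∃ c, F.getD k [] = [c] := by
  have hne := hG.hNE k hk
  rcases hx : F.getD k [] with _ | ⟨c, rest⟩
  · exact absurd hx hne
  · rcases rest with _ | ⟨d, rest'⟩
    · exact ⟨c, rfl⟩
    · rw [hx] at hsmall; simp at hsmall

lemma expand_term (hG : Good T F I J) {k : ℕ} (hk : k < F.length)
    (hsmall : ¬ 1 < (F.getD k []).length) :
    (mkG T F I J hG).expand (fN hG (repN T F I J k)) = F.getD k [] := by
  obtain ⟨c, hc⟩ := small_factor hG hk hsmall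
  have hcT : c ∈ T.dedup := List.mem_dedup.2 (hG.hHead k hk c (by rw [hc]; exact List.mem_cons_self))
  have hrep : repN T F I J k = T.dedup.idxOf c := by
    unfold repN
    rw [if_neg hsmall, hc]
    rfl
  have hlt : repN T F I J k < T.dedup.length := repN_small_lt hG hk hsmall
  have hltg : repN T F I J k < gN T F := by unfold gN; omega
  have hco : ((fN hG (repN T F I J k) : Fin (gN T F)) : ℕ) = repN T F I J k := fN_coe hG hltg
  have hi : ((fN hG (repN T F I J k) : Fin (gN T F)) : ℕ) < T.dedup.length := by omega
  rw [(mkG T F I J hG).expand_inl (rule_term hG hi), hc]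
  congr 1
  have : (⟨((fN hG (repN T F I J k) : Fin (gN T F)) : ℕ), hi⟩ : Fin T.dedup.length) =
      ⟨T.dedup.idxOf c, by rwa [← hrep]⟩ := by
    ext; rw [hco]; simpa using hrep
  rw [this]
  exact List.idxOf_get _

/-- splitting a slice of a list at position s -/
lemma slice_split {β : Type*} {M : List β} {a s : ℕ} (h1 : a ≤ s) (h2 : s ≤ M.length) :
    M.drop a = (M.take s).drop a ++ M.drop s := by
  conv_lhs => rw [← List.take_append_drop s M]
  rw [List.drop_append]
  congr 1
  rw [List.length_take, min_eq_left h2, Nat.sub_eq_zero_of_le h1, List.drop_zero]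

lemma slice_split' {β : Type*} {L : List β} {a s e : ℕ} (h1 : a ≤ s) (h2 : s ≤ e)
    (h3 : e < L.length) :
    (L.take (e+1)).drop a = (L.take s).drop a ++ (L.take (e+1)).drop s := by
  have : (L.take (e+1)).take s = L.take s := by
    rw [List.take_take, min_eq_left (by omega)]
  rw [← this]
  apply slice_split h1
  rw [List.length_take]
  omega

lemma slice_single {β : Type*} {L : List β} {a : ℕ} (d : β) (h : a < L.length) :
    (L.take (a+1)).drop a = [L.getD a d] := by
  rw [List.drop_take, show a + 1 - a = 1 by omega,
    List.getD_eq_getElem?_getD, List.getElem?_eq_getElem h]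
  rw [List.take_one, List.head?_drop, List.getElem?_eq_getElem h]
  rfl

lemma key_rep_lt (hG : Good T F I J) {k s : ℕ} (hs : s ∈ splits F) (hk : k < F.length)
    (hbig : 1 < (F.getD k []).length) (hke : J k < eN F I J s) :
    key F I J (tN F I J (I k) (J k)) < key F I J s := by
  obtain ⟨hts, hta, hte, h1, h2, h3⟩ := repN_big_spec hG hk hbig
  have hsb := mem_splits.1 hs
  have hm2 : 2 ≤ F.length := by omega
  have hIJ := RS_fst_lt_snd hG.hR (RS_self (I := I) (J := J) hk hbig)
  simp only at hIJ
  apply key_lt_key₁ (by omega)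
  · rw [hta]
    have := eN_le hG.hR hsb.2
    omega
  · rw [hte]; exact hke

lemma key_lcComb (hG : Good T F I J) {s : ℕ} (hs : s ∈ splits F)
    (ha : aN F I J s ≠ s - 1) :
    tN F I J (aN F I J s) (s - 1) ∈ splits F ∧
    aN F I J (tN F I J (aN F I J s) (s - 1)) = aN F I J s ∧
    eN F I J (tN F I J (aN F I J s) (s - 1)) = s - 1 ∧
    key F I J (tN F I J (aN F I J s) (s - 1)) < key F I J s := by
  have hsb := mem_splits.1 hs
  have has : aN F I J s < s := aN_lt hsb.1
  have halt : aN F I J s < s - 1 := by omega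
  have hes : s ≤ eN F I J s := le_eN hG.hR
  obtain ⟨ht1, ht2, hta, hte⟩ := lcSpec hG.hR hG.hL hsb.1 hsb.2 halt
  refine ⟨by rw [mem_splits]; omega, hta, hte, ?_⟩
  apply key_lt_key₁ (by omega)
  · rw [hta]; omega
  · rw [hte]; omega

lemma key_rcComb (hG : Good T F I J) {s : ℕ} (hs : s ∈ splits F)
    (he : eN F I J s ≠ s) :
    tN F I J s (eN F I J s) ∈ splits F ∧
    aN F I J (tN F I J s (eN F I J s)) = s ∧
    eN F I J (tN F I J s (eN F I J s)) = eN F I J s ∧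
    key F I J (tN F I J s (eN F I J s)) < key F I J s := by
  have hsb := mem_splits.1 hs
  have has : aN F I J s < s := aN_lt hsb.1
  have hes : s ≤ eN F I J s := le_eN hG.hR
  have hmem : (s, eN F I J s) ∈ RS F I J := by
    rcases eN_eq_or_mem (F := F) (I := I) (J := J) (s := s) with h | h
    · exact absurd h he
    · exact h
  obtain ⟨ht1, ht2, hta, hte⟩ := topSpec hG.hR hG.hL hmem
  have heb := eN_le hG.hR hsb.2
  refine ⟨by rw [mem_splits]; omega, hta, hte, ?_⟩
  apply key_lt_key₂
  · rw [hte]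
  · rw [hta]; omega
  · rw [hta]; omega

lemma expand_rep (hG : Good T F I J) {K : ℕ}
    (IH : ∀ s' ∈ splits F, key F I J s' < K →
      (mkG T F I J hG).expand (fN hG (binIdx T F I J s')) =
        ((F.take (eN F I J s' + 1)).drop (aN F I J s')).flatten)
    {k : ℕ} (hk : k < F.length)
    (hkey : 1 < (F.getD k []).length → key F I J (tN F I J (I k) (J k)) < K) :
    (mkG T F I J hG).expand (fN hG (repN T F I J k)) = F.getD k [] := by
  by_cases hbig : 1 < (F.getD k []).length
  · obtain ⟨hts, hta, hte, _, _, _⟩ := repN_big_spec hG hk hbig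
    have hrep : repN T F I J k = binIdx T F I J (tN F I J (I k) (J k)) := if_pos hbig
    rw [hrep, IH _ hts (hkey hbig), hta, hte]
    exact (hG.hS k hk hbig).symm
  · exact expand_term hG hk hbig

lemma expand_bin (hG : Good T F I J) (n : ℕ) : ∀ s ∈ splits F, key F I J s ≤ n →
    (mkG T F I J hG).expand (fN hG (binIdx T F I J s)) =
      ((F.take (eN F I J s + 1)).drop (aN F I J s)).flatten := by
  induction n using Nat.strong_induction_on with
  | _ n IHn =>
  intro s hs hkey
  have IH : ∀ s' ∈ splits F, key F I J s' < key F I J s →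
      (mkG T F I J hG).expand (fN hG (binIdx T F I J s')) =
        ((F.take (eN F I J s' + 1)).drop (aN F I J s')).flatten := by
    intro s' hs' hk
    exact IHn (key F I J s') (by omega) s' hs' le_rfl
  have hsb := mem_splits.1 hs
  have has : aN F I J s < s := aN_lt hsb.1
  have hes : s ≤ eN F I J s := le_eN hG.hR
  have hee : eN F I J s ≤ F.length - 1 := eN_le hG.hR hsb.2
  have hm2 : 2 ≤ F.length := by omega
  rw [(mkG T F I J hG).expand_inr (rule_of_splits hG hs)]
  have hsplit : ((F.take (eN F I J s + 1)).drop (aN F I J s)) =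
      ((F.take s).drop (aN F I J s)) ++ ((F.take (eN F I J s + 1)).drop s) :=
    slice_split' (by omega) hes (by omega)
  rw [hsplit, List.flatten_append]
  congr 1
  · -- left child
    unfold lcN
    split
    · rename_i ha
      have hJlt := hG.hJ (s-1)
      rw [expand_rep hG IH (k := s - 1) (by omega)
        (fun hbig => key_rep_lt hG hs (by omega) hbig (by have := hJlt (by omega) hbig; omega))]
      have heq : (F.take s).drop (aN F I J s) = [F.getD (s-1) []] := by
        rw [ha]
        have h0 := slice_single (L := F) (a := s - 1) [] (by omega)
        rw [show s - 1 + 1 = s by omega] at h0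
        exact h0
      rw [heq]
      simp
    · rename_i ha
      obtain ⟨hts, hta, hte, hkl⟩ := key_lcComb hG hs ha
      rw [IH _ hts hkl, hta, hte, show s - 1 + 1 = s by omega]
  · -- right child
    unfold rcN
    split
    · rename_i he
      have hJlt := hG.hJ s
      rw [expand_rep hG IH (k := s) (by omega)
        (fun hbig => key_rep_lt hG hs (by omega) hbig (by have := hJlt (by omega) hbig; omega))]
      have heq : (F.take (eN F I J s + 1)).drop s = [F.getD s []] := by
        rw [he]
        exact slice_single (L := F) (a := s) [] (by omega)
      rw [heq]
      simp
    · rename_i he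
      obtain ⟨hts, hta, hte, hkl⟩ := key_rcComb hG hs he
      rw [IH _ hts hkl, hta, hte]

lemma expand_bin' (hG : Good T F I J) {s : ℕ} (hs : s ∈ splits F) :
    (mkG T F I J hG).expand (fN hG (binIdx T F I J s)) =
      ((F.take (eN F I J s + 1)).drop (aN F I J s)).flatten :=
  expand_bin hG (key F I J s) s hs le_rfl

lemma expand_rep' (hG : Good T F I J) {k : ℕ} (hk : k < F.length) :
    (mkG T F I J hG).expand (fN hG (repN T F I J k)) = F.getD k [] := by
  apply expand_rep hG (K := key F I J (tN F I J (I k) (J k)) + 1)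
    (fun s' hs' _ => expand_bin hG (key F I J s') s' hs' le_rfl) hk
  intro _
  omega

lemma fN_binIdx_inj (hG : Good T F I J) {s s' : ℕ} (hs : s ∈ splits F) (hs' : s' ∈ splits F)
    (h : fN hG (binIdx T F I J s) = fN hG (binIdx T F I J s')) : s = s' := by
  apply binIdx_inj hG.hR hG.hL hs hs'
  have h1 := coe_fN_binIdx hG hs
  have h2 := coe_fN_binIdx hG hs'
  rw [← h1, ← h2, h]

lemma visit_rep (hG : Good T F I J) {k : ℕ} (hk : k < F.length) (S : Finset (Fin (gN T F)))
    (hmem : 1 < (F.getD k []).length →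
      fN hG (binIdx T F I J (tN F I J (I k) (J k))) ∈ S) :
    (mkG T F I J hG).visit (fN hG (repN T F I J k)) S = ([F.getD k []], S) := by
  by_cases hbig : 1 < (F.getD k []).length
  · obtain ⟨hts, _, _, _, _, _⟩ := repN_big_spec hG hk hbig
    have hrep : repN T F I J k = binIdx T F I J (tN F I J (I k) (J k)) := if_pos hbig
    rw [hrep, (mkG T F I J hG).visit_inr_mem (rule_of_splits hG hts) (hmem hbig), ← hrep,
      expand_rep' hG hk]
    rfl
  · obtain ⟨c, hc⟩ := small_factor hG hk hbig
    have hlt : repN T F I J k < T.dedup.length := repN_small_lt hG hk hbig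
    have hco : ((fN hG (repN T F I J k) : Fin (gN T F)) : ℕ) = repN T F I J k :=
      fN_coe hG (by unfold gN; omega)
    have hi : ((fN hG (repN T F I J k) : Fin (gN T F)) : ℕ) < T.dedup.length := by omega
    erw [(mkG T F I J hG).visit_inl (rule_term hG hi), expand_term hG hk hbig]
    rfl

lemma visit_bin (hG : Good T F I J) (n : ℕ) : ∀ s ∈ splits F, key F I J s ≤ n →
    ∀ S : Finset (Fin (gN T F)),
    (∀ s' ∈ splits F, aN F I J s ≤ aN F I J s' → eN F I J s' ≤ eN F I J s →
      fN hG (binIdx T F I J s') ∉ S) →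
    (∀ k, aN F I J s ≤ k → k ≤ eN F I J s → 1 < (F.getD k []).length →
      I k < aN F I J s → fN hG (binIdx T F I J (tN F I J (I k) (J k))) ∈ S) →
    (mkG T F I J hG).visit (fN hG (binIdx T F I J s)) S =
      ((F.take (eN F I J s + 1)).drop (aN F I J s),
       S ∪ ((splits F).filter fun s' => aN F I J s ≤ aN F I J s' ∧ eN F I J s' ≤ eN F I J s).image
         (fun s' => fN hG (binIdx T F I J s'))) := by
  induction n using Nat.strong_induction_on with
  | _ n IHn =>
  intro s hs hkey S H1 H2
  have hsb := mem_splits.1 hs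
  have has : aN F I J s < s := aN_lt hsb.1
  have hes : s ≤ eN F I J s := le_eN hG.hR
  have hee : eN F I J s ≤ F.length - 1 := eN_le hG.hR hsb.2
  have hm2 : 2 ≤ F.length := by omega
  have hiS : fN hG (binIdx T F I J s) ∉ S := H1 s hs le_rfl le_rfl
  rw [(mkG T F I J hG).visit_inr_not_mem (rule_of_splits hG hs) hiS]
  set S1 : Finset (Fin (gN T F)) := insert (fN hG (binIdx T F I J s)) S with hS1
  set Xl : Finset (Fin (gN T F)) :=
    ((splits F).filter fun s' => aN F I J s ≤ aN F I J s' ∧ eN F I J s' ≤ s - 1).image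
      (fun s' => fN hG (binIdx T F I J s')) with hXl
  set Xr : Finset (Fin (gN T F)) :=
    ((splits F).filter fun s' => s ≤ aN F I J s' ∧ eN F I J s' ≤ eN F I J s).image
      (fun s' => fN hG (binIdx T F I J s')) with hXr
  -- left recursive call
  have h1 : (mkG T F I J hG).visit (fN hG (lcN T F I J s)) S1 =
      ((F.take s).drop (aN F I J s), S1 ∪ Xl) := by
    unfold lcN
    split
    · rename_i ha
      -- single factor leaf
      have hXle : Xl = ∅ := by
        rw [hXl, Finset.image_eq_empty, Finset.filter_eq_empty_iff]
        intro s' hs'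
        have h1 := aN_lt (F := F) (I := I) (J := J) (mem_splits.1 hs').1
        have h2 := le_eN (s := s') hG.hR
        omega
      have heq : (F.take s).drop (aN F I J s) = [F.getD (s-1) []] := by
        rw [ha]
        have h0 := slice_single (L := F) (a := s - 1) [] (by omega)
        rw [show s - 1 + 1 = s by omega] at h0
        exact h0
      rw [visit_rep hG (k := s - 1) (by omega) S1 ?meml, heq, hXle, Finset.union_empty]
      case meml =>
        intro hbig
        have hJlt := hG.hJ (s-1) (by omega) hbig
        have hIJ := RS_fst_lt_snd hG.hR (RS_self (I := I) (J := J) (k := s-1) (by omega) hbig)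
        simp only at hIJ
        apply Finset.mem_insert_of_mem
        exact H2 (s-1) (by omega) (by omega) hbig (by omega)
    · rename_i ha
      obtain ⟨hts, hta, hte, hkl⟩ := key_lcComb hG hs ha
      have hres := IHn (key F I J (tN F I J (aN F I J s) (s - 1))) (by omega) _ hts le_rfl S1
        ?H1' ?H2'
      · rw [hres, hta, hte, show s - 1 + 1 = s by omega]
      case H1' =>
        intro s'' hs'' hg1 hg2
        rw [hta] at hg1
        rw [hte] at hg2
        rw [hS1, Finset.mem_insert]
        push_neg
        constructor
        · intro heqf
          have := fN_binIdx_inj hG hs'' hs heqf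
          subst this
          have := le_eN (s := s'') hG.hR
          omega
        · exact H1 s'' hs'' hg1 (by omega)
      case H2' =>
        intro k hk1 hk2 hbig hIlt
        rw [hta] at hk1 hIlt
        rw [hte] at hk2
        exact Finset.mem_insert_of_mem (H2 k hk1 (by omega) hbig hIlt)
  erw [h1]
  -- right recursive call
  have hsub : ∀ k, aN F I J s ≤ I k → 1 < (F.getD k []).length → k < F.length →
      J k ≤ s - 1 → fN hG (binIdx T F I J (tN F I J (I k) (J k))) ∈ Xl := by
    intro k hIk hbig hkm hJk
    obtain ⟨hts', hta', hte', _, _, _⟩ := repN_big_spec hG hkm hbig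
    rw [hXl, Finset.mem_image]
    refine ⟨_, Finset.mem_filter.2 ⟨hts', ?_, ?_⟩, rfl⟩
    · rw [hta']; exact hIk
    · rw [hte']; exact hJk
  have h2 : (mkG T F I J hG).visit (fN hG (rcN T F I J s)) (S1 ∪ Xl) =
      ((F.take (eN F I J s + 1)).drop s, (S1 ∪ Xl) ∪ Xr) := by
    unfold rcN
    split
    · rename_i he
      have hXre : Xr = ∅ := by
        rw [hXr, Finset.image_eq_empty, Finset.filter_eq_empty_iff]
        intro s' hs'
        have h1 := aN_lt (F := F) (I := I) (J := J) (mem_splits.1 hs').1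
        have h2 := le_eN (s := s') hG.hR
        omega
      have heq : (F.take (eN F I J s + 1)).drop s = [F.getD s []] := by
        rw [he]
        exact slice_single (L := F) (a := s) [] (by omega)
      erw [visit_rep hG (k := s) (by omega) _ ?memr, heq, hXre, Finset.union_empty]
      rfl
      case memr =>
        intro hbig
        have hJlt := hG.hJ s (by omega) hbig
        have hIJ := RS_fst_lt_snd hG.hR (RS_self (I := I) (J := J) (k := s) (by omega) hbig)
        simp only at hIJ
        by_cases hIa : I s < aN F I J s
        · exact Finset.mem_union_left _ (Finset.mem_insert_of_mem
            (H2 s (by omega) (by omega) hbig hIa))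
        · exact Finset.mem_union_right _ (hsub s (by omega) hbig (by omega) (by omega))
    · rename_i he
      have hmem : (s, eN F I J s) ∈ RS F I J := by
        rcases eN_eq_or_mem (F := F) (I := I) (J := J) (s := s) with h | h
        · exact absurd h he
        · exact h
      obtain ⟨hts, hta, hte, hkl⟩ := key_rcComb hG hs he
      have hres := IHn (key F I J (tN F I J s (eN F I J s))) (by omega) _ hts le_rfl (S1 ∪ Xl)
        ?H1'' ?H2''
      · erw [hres, hta, hte]
      case H1'' =>
        intro s'' hs'' hg1 hg2
        rw [hta] at hg1
        rw [hte] at hg2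
        have hb'' := mem_splits.1 hs''
        have ha'' := aN_lt (F := F) (I := I) (J := J) (s := s'') hb''.1
        have he'' := le_eN (s := s'') hG.hR
        rw [Finset.mem_union, hS1, Finset.mem_insert]
        push_neg
        refine ⟨⟨?_, H1 s'' hs'' (by omega) hg2⟩, ?_⟩
        · intro heqf
          have := fN_binIdx_inj hG hs'' hs heqf
          omega
        · intro hmemXl
          rw [hXl, Finset.mem_image] at hmemXl
          obtain ⟨s₃, hs₃, heqf⟩ := hmemXl
          rw [Finset.mem_filter] at hs₃
          have := fN_binIdx_inj hG hs₃.1 hs'' heqf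
          subst this
          omega
      case H2'' =>
        intro k hk1 hk2 hbig hIlt
        rw [hta] at hk1 hIlt
        rw [hte] at hk2
        have hkm : k < F.length := by omega
        have hJlt := hG.hJ k hkm hbig
        have hkRS := RS_self (I := I) (J := J) hkm hbig
        have hIJ := RS_fst_lt_snd hG.hR hkRS
        simp only at hIJ
        -- laminarity: J k < s
        have hJs : J k < s := by
          rcases lam4 hG.hL hkRS hmem with (hd | hd) | ⟨h5, h6⟩ | ⟨h5, h6⟩ <;> omega
        by_cases hIa : I k < aN F I J s
        · exact Finset.mem_union_left _ (Finset.mem_insert_of_mem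
            (H2 k (by omega) (by omega) hbig hIa))
        · exact Finset.mem_union_right _ (hsub k (by omega) hbig hkm (by omega))
  erw [h2]
  -- combine
  have hsplit : ((F.take (eN F I J s + 1)).drop (aN F I J s)) =
      ((F.take s).drop (aN F I J s)) ++ ((F.take (eN F I J s + 1)).drop s) :=
    slice_split' (by omega) hes (by omega)
  simp only
  rw [← hsplit]
  refine Prod.ext rfl ?_
  -- set equality
  simp only
  ext x
  simp only [Finset.mem_union, hS1, Finset.mem_insert]
  constructor
  · rintro (((hx | hx) | hx) | hx)
    · right
      rw [Finset.mem_image]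
      exact ⟨s, Finset.mem_filter.2 ⟨hs, le_rfl, le_rfl⟩, hx.symm ▸ rfl⟩
    · left; exact hx
    · right
      rw [hXl, Finset.mem_image] at hx
      obtain ⟨s₃, hs₃, heqf⟩ := hx
      rw [Finset.mem_filter] at hs₃
      rw [Finset.mem_image]
      exact ⟨s₃, Finset.mem_filter.2 ⟨hs₃.1, hs₃.2.1, by omega⟩, heqf⟩
    · right
      rw [hXr, Finset.mem_image] at hx
      obtain ⟨s₃, hs₃, heqf⟩ := hx
      rw [Finset.mem_filter] at hs₃
      rw [Finset.mem_image]
      exact ⟨s₃, Finset.mem_filter.2 ⟨hs₃.1, by omega, hs₃.2.2⟩, heqf⟩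
  · rintro (hx | hx)
    · left; left; right; exact hx
    · rw [Finset.mem_image] at hx
      obtain ⟨s₃, hs₃, heqf⟩ := hx
      rw [Finset.mem_filter] at hs₃
      obtain ⟨hs₃s, hg1, hg2⟩ := hs₃
      by_cases hss : s₃ = s
      · left; left; left; rw [← heqf, hss]
      · have hb₃ := mem_splits.1 hs₃s
        have hcr : ¬ (aN F I J s₃ < s ∧ s ≤ eN F I J s₃) := by
          intro ⟨hc1, hc2⟩
          exact hss (cross hG.hR hG.hL hsb.1 hsb.2 hb₃.1 hb₃.2 hg1 hg2 hc1 hc2)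
        push_neg at hcr
        by_cases hc1 : aN F I J s₃ < s
        · -- then eN s₃ < s : in Xl
          have hc2 := hcr hc1
          left; right
          rw [hXl, Finset.mem_image]
          exact ⟨s₃, Finset.mem_filter.2 ⟨hs₃s, hg1, by omega⟩, heqf⟩
        · right
          rw [hXr, Finset.mem_image]
          exact ⟨s₃, Finset.mem_filter.2 ⟨hs₃s, by omega, hg2⟩, heqf⟩

lemma root_span (hG : Good T F I J) (hm2 : 2 ≤ F.length) :
    (F.length - 1) ∈ splits F ∧ aN F I J (F.length - 1) = 0 ∧
      eN F I J (F.length - 1) = F.length - 1 := by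
  have hsp : (F.length - 1) ∈ splits F := by rw [mem_splits]; omega
  refine ⟨hsp, ?_, ?_⟩
  · obtain ⟨p, hp, he⟩ := exists_aN (F := F) (I := I) (J := J) (F.length - 1)
    rw [mem_cont] at hp
    rcases hp with h | ⟨h1, h2, h3⟩
    · have : p.1 = 0 := by rw [h]
      omega
    · have := RS_snd_le hG.hR h1
      omega
  · have h1 := le_eN (s := F.length - 1) hG.hR
    have h2 := eN_le (s := F.length - 1) hG.hR (le_refl _)
    omega

lemma mkG_produces (hG : Good T F I J) (hm2 : 2 ≤ F.length) (hflat : F.flatten = T) :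
    (mkG T F I J hG).Produces T := by
  obtain ⟨hsp, ha0, he0⟩ := root_span hG hm2
  show (mkG T F I J hG).expand (mkG T F I J hG).start = T
  have hstart : (mkG T F I J hG).start = fN hG (binIdx T F I J (F.length - 1)) := rfl
  rw [hstart, expand_bin' hG hsp, ha0, he0, show F.length - 1 + 1 = F.length by omega,
    List.take_length, List.drop_zero, hflat]

lemma mkG_parsing (hG : Good T F I J) (hm2 : 2 ≤ F.length) :
    (mkG T F I J hG).grammarParsing = F := by
  obtain ⟨hsp, ha0, he0⟩ := root_span hG hm2
  show ((mkG T F I J hG).visit (mkG T F I J hG).start ∅).1 = F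
  have hstart : (mkG T F I J hG).start = fN hG (binIdx T F I J (F.length - 1)) := rfl
  erw [hstart, visit_bin hG (key F I J (F.length - 1)) (F.length - 1) hsp le_rfl ∅
    (fun s' _ _ _ => Finset.notMem_empty _)
    (fun k hk1 hk2 hbig hI => by rw [ha0] at hI; omega)]
  simp only
  rw [ha0, he0, show F.length - 1 + 1 = F.length by omega, List.take_length, List.drop_zero]

lemma mkG_size (hG : Good T F I J) : (mkG T F I J hG).size = F.length + T.toFinset.card - 1 := by
  show gN T F = F.length + T.toFinset.card - 1
  unfold gN
  rw [List.card_toFinset]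
  have := hG.hm
  have := hG.hσ
  omega

end Lem2

open Lem2

/-- Lemma 2, backward direction: let `T` be a (nonempty) string with `σ = T.toFinset.card`
distinct symbols, and let `F = F_1 ⋯ F_m` be a factorization of `T` into nonempty factors
such that each factor `F_k` of length `> 1` comes with an index interval `[I k .. J k]`,
`I k < J k < k`, with `F_k = F_{I k} ⋯ F_{J k}`, and any two such intervals are disjoint or
nested. Then there is an SLP of size `m + σ - 1` producing `T` whose grammar parsing is
exactly `F`. (Indices of factors are 0-based here.) -/
theorem SLP.exists_of_parsing (T : List α) (hTne : T ≠ []) (F : List (List α))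
    (hflat : F.flatten = T) (hne : ∀ f ∈ F, f ≠ [])
    (I J : ℕ → ℕ)
    (h₁ : ∀ k : Fin F.length, 1 < (F.get k).length →
      I k < J k ∧ J k < k ∧ F.get k = ((F.take (J k + 1)).drop (I k)).flatten)
    (h₂ : ∀ x y : Fin F.length, 1 < (F.get x).length → 1 < (F.get y).length →
      (J x < I y ∨ J y < I x) ∨ (I x ≤ I y ∧ J y ≤ J x) ∨ (I y ≤ I x ∧ J x ≤ J y)) :
    ∃ G : SLP α, G.Produces T ∧ G.size = F.length + T.toFinset.card - 1 ∧
      G.grammarParsing = F := by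

  have hFne : F ≠ [] := by
    intro h
    rw [h] at hflat
    exact hTne hflat.symm
  have hm1 : 1 ≤ F.length := List.length_pos_iff.2 hFne
  have hgetD : ∀ k (hk : k < F.length), F.getD k [] = F.get ⟨k, hk⟩ := by
    intro k hk
    rw [List.getD_eq_getElem _ _ hk, List.get_eq_getElem]
  by_cases hm : F.length = 1
  · -- single factor
    obtain ⟨f, hF⟩ := List.length_eq_one_iff.1 hm
    subst hF
    have hfmem : f ∈ [f] := List.mem_cons_self
    have hfne : f ≠ [] := hne f hfmem
    have hfT : f = T := by simpa using hflat
    have hsmall : ¬ 1 < f.length := by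
      intro hbig
      have h0 : (0 : ℕ) < [f].length := by simp
      have := (h₁ ⟨0, h0⟩ hbig).2.1
      simp at this
    have hlen1 : f.length = 1 := by
      have := List.length_pos_iff.2 hfne
      omega
    obtain ⟨c, hc⟩ := List.length_eq_one_iff.1 hlen1
    refine ⟨⟨1, ⟨0, one_pos⟩, fun _ => Sum.inl c, by intro i j k h; simp at h⟩, ?_, ?_, ?_⟩
    · show SLP.expand _ _ = T
      rw [SLP.expand_inl _ rfl, ← hfT, hc]
    · show (1 : ℕ) = [f].length + T.toFinset.card - 1
      rw [← hfT, hc]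
      simp
    · show (SLP.visit _ _ ∅).1 = [f]
      rw [SLP.visit_inl _ rfl]
      simp only
      rw [SLP.expand_inl _ rfl, hc]
  · have hm2 : 2 ≤ F.length := by omega
    have hbigD : ∀ k (hk : k < F.length), 1 < (F.getD k []).length →
        1 < (F.get (⟨k, hk⟩ : Fin F.length)).length := by
      intro k hk h
      rwa [hgetD k hk] at h
    have hG : Good T F I J := by
      refine ⟨?_, ?_, ?_, ?_, ?_, hm1, ?_, ?_⟩
      · -- hypR
        intro p hp
        rw [mem_RS] at hp
        obtain ⟨k, hk, hbig, hI, hJ⟩ := hp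
        have h := h₁ ⟨k, hk⟩ (hbigD k hk hbig)
        simp only [Fin.val_mk] at h
        omega
      · -- hypLam
        intro p q hp hq
        rw [mem_RS] at hp hq
        obtain ⟨k, hk, hbig, hI, hJ⟩ := hp
        obtain ⟨k', hk', hbig', hI', hJ'⟩ := hq
        have h := h₂ ⟨k, hk⟩ ⟨k', hk'⟩ (hbigD k hk hbig) (hbigD k' hk' hbig')
        simp only [Fin.val_mk] at h
        omega
      · -- hypJlt
        intro k hk hbig
        have h := (h₁ ⟨k, hk⟩ (hbigD k hk hbig)).2.1
        simpa using h
      · -- hypNE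
        intro k hk
        rw [hgetD k hk]
        exact hne _ (List.get_mem F ⟨k, hk⟩)
      · -- hypHead
        intro k hk c hc
        rw [← hflat]
        rw [List.mem_flatten]
        refine ⟨F.getD k [], ?_, hc⟩
        rw [hgetD k hk]
        exact List.get_mem F ⟨k, hk⟩
      · -- hσ
        have : T.dedup ≠ [] := by
          intro hd
          obtain ⟨a, ha⟩ := List.exists_mem_of_ne_nil T hTne
          have h2 : a ∈ T.dedup := List.mem_dedup.2 ha
          rw [hd] at h2
          simp at h2
        exact List.length_pos_iff.2 this
      · -- hypSlice
        intro k hk hbig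
        have h := (h₁ ⟨k, hk⟩ (hbigD k hk hbig)).2.2
        rw [hgetD k hk]
        simpa using h
    exact ⟨mkG T F I J hG, mkG_produces hG hm2 hflat, mkG_size hG, mkG_parsing hG hm2⟩
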